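/- Let ℓ ≥ 1 be an integer, a = 2π/(2ℓ+1), and let m be an integer with |m| ≤ ℓ. Then for all real θ, φ: ∫₀^{2π} e^{-i m α}·[cos θ + i·sin θ·sin(φ + α)]^ℓ dα = (2π/(2ℓ+1))·Σ_{j=-ℓ}^{ℓ} e^{-i m j a}·[cos θ + i·sin θ·sin(φ + j·a)]^ℓ. (This is a finite version of the classical integral representation of the spherical harmonics Y_{ℓm}.) -/

import Mathlib

open Real

noncomputable def Ee (k : ℤ) (α : ℝ) : ℂ := Complex.exp (Complex.I * k * α)

lemma Ee_mul (k l : ℤ) (α : ℝ) : Ee k α * Ee l α = Ee (k + l) α := by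
  rw [Ee, Ee, Ee, ← Complex.exp_add]
  push_cast
  ring_nf

lemma Ee_cont (k : ℤ) : Continuous (Ee k) := by
  unfold Ee; fun_prop

lemma integral_Ee (k : ℤ) :
    (∫ α in (0:ℝ)..(2*π), Ee k α) = if k = 0 then ((2*π : ℝ) : ℂ) else 0 := by
  rcases eq_or_ne k 0 with h | h
  · subst h
    simp [Ee]
  · rw [if_neg h]
    have hc : (Complex.I * (k : ℂ)) ≠ 0 :=
      mul_ne_zero Complex.I_ne_zero (Int.cast_ne_zero.mpr h)
    have := integral_exp_mul_complex (a := 0) (b := 2*π) hc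
    simp only [Ee]
    rw [this]
    have h1 : Complex.I * (k : ℂ) * ((2*π : ℝ) : ℂ) = (k : ℂ) * (2 * π * Complex.I) := by
      push_cast; ring
    have h2 : Complex.I * (k : ℂ) * ((0 : ℝ) : ℂ) = 0 := by push_cast; ring
    rw [h1, h2, Complex.exp_int_mul_two_pi_mul_I, Complex.exp_zero, sub_self, zero_div]

lemma sum_Ee (N : ℕ) (r : ℤ) (hr : r.natAbs ≤ 2*N) :
    (∑ j ∈ Finset.Icc (-(N:ℤ)) N, Ee r ((j:ℝ) * (2*π/(2*N+1)))) =
      if r = 0 then (2*(N:ℂ)+1) else 0 := by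
  have hN0 : (2*(N:ℝ)+1) ≠ 0 := by positivity
  rcases eq_or_ne r 0 with h | h
  · subst h
    simp only [Ee, Int.cast_zero, mul_zero, zero_mul, Complex.exp_zero, if_pos rfl]
    rw [Finset.sum_const, Int.card_Icc]
    have h1 : ((N:ℤ) + 1 - -(N:ℤ)).toNat = 2*N+1 := by omega
    rw [h1]
    push_cast
    ring
  · rw [if_neg h]
    set a : ℝ := 2*π/(2*N+1) with ha
    set ω : ℂ := Complex.exp (Complex.I * r * a) with hω
    have hω0 : ω ≠ 0 := Complex.exp_ne_zero _
    have haN : (2*(N:ℝ)+1) * a = 2*π := by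
      rw [ha]; field_simp
    have hωpow : ω ^ (2*N+1) = 1 := by
      rw [hω, ← Complex.exp_nat_mul]
      have : ((2*N+1 : ℕ) : ℂ) * (Complex.I * r * a) = (r : ℂ) * (2 * π * Complex.I) := by
        have : ((2*N+1 : ℕ) : ℂ) * (a : ℂ) = ((2*π : ℝ) : ℂ) := by
          have h' : ((2*N+1 : ℕ) : ℝ) * a = 2*π := by push_cast; linarith [haN]
          rw [← Complex.ofReal_natCast, ← Complex.ofReal_mul, h']
        calc ((2*N+1 : ℕ) : ℂ) * (Complex.I * r * a)
            = (r : ℂ) * (((2*N+1 : ℕ) : ℂ) * (a:ℂ)) * Complex.I := by ring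
          _ = (r : ℂ) * (2 * π * Complex.I) := by rw [this]; push_cast; ring
      rw [this, Complex.exp_int_mul_two_pi_mul_I]
    have hω1 : ω ≠ 1 := by
      intro hcon
      rw [hω, Complex.exp_eq_one_iff] at hcon
      obtain ⟨n, hn⟩ := hcon
      have hra : ((r : ℝ) * a : ℝ) = ((n:ℝ) * (2 * π)) := by
        have : ((r : ℂ)) * (a:ℂ) = (n : ℂ) * (2 * π) := by
          have h2 : Complex.I * ((r:ℂ) * (a:ℂ)) = Complex.I * ((n:ℂ) * (2*π)) := by
            rw [show Complex.I * ((r:ℂ) * (a:ℂ)) = Complex.I * (r:ℂ) * (a:ℂ) from by ring, hn]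
            ring
          exact mul_left_cancel₀ Complex.I_ne_zero h2
        exact_mod_cast this
      have hπ : (0:ℝ) < π := Real.pi_pos
      have hr2 : (r : ℝ) = (n : ℝ) * (2*(N:ℝ)+1) := by
        rw [ha] at hra
        field_simp at hra
        nlinarith [hra]
      have heq : r = n * (2*(N:ℤ)+1) := by exact_mod_cast hr2
      rcases eq_or_ne n 0 with h0 | h0
      · exact h (by simp [heq, h0])
      · have h2 : r.natAbs = n.natAbs * (2*N+1) := by
          have hx : (2*(N:ℤ)+1).natAbs = 2*N+1 := by omega
          rw [heq, Int.natAbs_mul, hx]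
        have h1 : 1 ≤ n.natAbs := by
          have := Int.natAbs_pos.mpr h0
          omega
        have h3 : 2*N+1 ≤ n.natAbs * (2*N+1) := Nat.le_mul_of_pos_left (2*N+1) (by omega)
        omega
    have hterm : ∀ j ∈ Finset.Icc (-(N:ℤ)) N, Ee r ((j:ℝ) * a) = ω ^ j := by
      intro j _
      rw [hω, Ee, ← Complex.exp_int_mul]
      congr 1
      push_cast
      ring
    rw [Finset.sum_congr rfl hterm]
    have hmap : Finset.Icc (-(N:ℤ)) N
        = (Finset.range (2*N+1)).map ⟨fun i : ℕ => (i:ℤ) - N, show Function.Injective (fun i : ℕ => (i:ℤ) - N) from by intro a b hab; simp only [sub_left_inj, Nat.cast_inj] at hab; exact hab⟩ := by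
      ext x
      simp only [Finset.mem_Icc, Finset.mem_map, Finset.mem_range, Function.Embedding.coeFn_mk]
      constructor
      · intro hx; exact ⟨(x + N).toNat, by omega, by omega⟩
      · rintro ⟨i, hi, rfl⟩; omega
    rw [hmap, Finset.sum_map]
    simp only [Function.Embedding.coeFn_mk]
    have : ∀ i : ℕ, ω ^ ((i:ℤ) - N) = ω ^ i / ω ^ N := by
      intro i
      rw [zpow_sub₀ hω0]
      norm_cast
    simp only [this]
    rw [← Finset.sum_div, geom_sum_eq hω1, hωpow, sub_self, zero_div, zero_div]

noncomputable def bcoef (θ φ : ℝ) : ℤ → ℂ := fun t =>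
  if t = 1 then (Real.sin θ : ℂ) * Complex.exp (Complex.I * φ) / 2
  else if t = -1 then -((Real.sin θ : ℂ) * Complex.exp (-(Complex.I * φ)) / 2)
  else if t = 0 then (Real.cos θ : ℂ) else 0

lemma base_expand (θ φ α : ℝ) :
    (Real.cos θ : ℂ) + Complex.I * (Real.sin θ : ℂ) * (Real.sin (φ + α) : ℂ)
      = ∑ t ∈ Finset.Icc (-1 : ℤ) 1, bcoef θ φ t * Ee t α := by
  have hIcc : Finset.Icc (-1 : ℤ) 1 = {-1, 0, 1} := by decide
  rw [hIcc]
  rw [Finset.sum_insert (by decide), Finset.sum_insert (by decide), Finset.sum_singleton]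
  simp only [bcoef, Ee]
  norm_num
  have key : Complex.I * Complex.sin ((φ:ℂ)+(α:ℂ))
      = (Complex.exp (Complex.I*φ) * Complex.exp (Complex.I*α)
          - Complex.exp (-(Complex.I*φ)) * Complex.exp (-(Complex.I*α)))/2 := by
    rw [Complex.sin,
      show (-((φ:ℂ)+(α:ℂ))*Complex.I) = (-(Complex.I*(φ:ℂ)) + -(Complex.I*(α:ℂ))) from by ring,
      show (((φ:ℂ)+(α:ℂ))*Complex.I) = (Complex.I*(φ:ℂ) + Complex.I*(α:ℂ)) from by ring,
      Complex.exp_add, Complex.exp_add]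
    linear_combination ((Complex.exp (-(Complex.I*(φ:ℂ))) * Complex.exp (-(Complex.I*(α:ℂ)))
      - Complex.exp (Complex.I*(φ:ℂ)) * Complex.exp (Complex.I*(α:ℂ)))/2) * Complex.I_sq
  linear_combination Complex.sin (θ:ℂ) * key

lemma shift_sum (n : ℕ) (c : ℤ → ℂ) (hc : ∀ k, c k ≠ 0 → k.natAbs ≤ n) (t : ℤ)
    (ht : t.natAbs ≤ 1) (F : ℤ → ℂ) :
    ∑ k ∈ Finset.Icc (-(n:ℤ)) n, c k * F (k + t)
      = ∑ k ∈ Finset.Icc (-((n:ℤ)+1)) ((n:ℤ)+1), c (k - t) * F k := by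
  have h1 : ∑ k ∈ Finset.Icc (-(n:ℤ)) n, c k * F (k + t)
      = ∑ k ∈ (Finset.Icc (-(n:ℤ)) n).map (addRightEmbedding t), c (k - t) * F k := by
    rw [Finset.sum_map]
    apply Finset.sum_congr rfl
    intro k _
    simp [addRightEmbedding_apply]
  rw [h1, Finset.map_add_right_Icc]
  apply Finset.sum_subset
  · apply Finset.Icc_subset_Icc <;> omega
  · intro k hk hk2
    simp only [Finset.mem_Icc] at hk hk2
    have : c (k - t) = 0 := by
      by_contra hcne
      have := hc _ hcne
      omega
    rw [this, zero_mul]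

lemma pow_expand (θ φ : ℝ) (n : ℕ) : ∃ c : ℤ → ℂ,
    (∀ k, c k ≠ 0 → k.natAbs ≤ n) ∧
    ∀ α : ℝ, ((Real.cos θ : ℂ) + Complex.I * (Real.sin θ : ℂ) * (Real.sin (φ + α) : ℂ)) ^ n
      = ∑ k ∈ Finset.Icc (-(n:ℤ)) n, c k * Ee k α := by
  induction n with
  | zero =>
      refine ⟨fun k => if k = 0 then 1 else 0, ?_, ?_⟩
      · intro k hk
        by_contra h
        simp [show k ≠ 0 by omega] at hk
      · intro α
        simp [Ee]
  | succ n ih =>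
      obtain ⟨c, hsupp, hform⟩ := ih
      set b := bcoef θ φ with hb
      refine ⟨fun k => c (k+1) * b (-1) + c k * b 0 + c (k-1) * b 1, ?_, ?_⟩
      · intro k hk
        by_contra hcon
        have h1 : c (k+1) = 0 := by
          by_contra h'; have := hsupp _ h'; omega
        have h2 : c k = 0 := by
          by_contra h'; have := hsupp _ h'; omega
        have h3 : c (k-1) = 0 := by
          by_contra h'; have := hsupp _ h'; omega
        simp [h1, h2, h3] at hk
      · intro α
        rw [pow_succ, hform α, base_expand θ φ α, ← hb]
        rw [Finset.sum_mul_sum]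
        have hIcc : Finset.Icc (-1 : ℤ) 1 = {-1, 0, 1} := by decide
        rw [hIcc]
        have hstep : ∀ k : ℤ, ∑ t ∈ ({-1, 0, 1} : Finset ℤ), c k * Ee k α * (b t * Ee t α)
            = c k * b (-1) * Ee (k + (-1)) α + c k * b 0 * Ee (k + 0) α
              + c k * b 1 * Ee (k + 1) α := by
          intro k
          rw [Finset.sum_insert (by decide), Finset.sum_insert (by decide),
            Finset.sum_singleton]
          rw [← Ee_mul, ← Ee_mul, ← Ee_mul]
          ring
        rw [Finset.sum_congr rfl fun k _ => hstep k]
        rw [Finset.sum_add_distrib, Finset.sum_add_distrib]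
        have e1 := shift_sum n (fun k => c k * b (-1)) (fun k hk => hsupp k (by
          intro h; simp [h] at hk)) (-1) (by decide) (fun r => Ee r α)
        have e2 := shift_sum n (fun k => c k * b 0) (fun k hk => hsupp k (by
          intro h; simp [h] at hk)) 0 (by decide) (fun r => Ee r α)
        have e3 := shift_sum n (fun k => c k * b 1) (fun k hk => hsupp k (by
          intro h; simp [h] at hk)) 1 (by decide) (fun r => Ee r α)
        rw [e1, e2, e3]
        have hcast : ((n+1 : ℕ) : ℤ) = (n : ℤ) + 1 := by push_cast; ring
        rw [hcast]
        rw [← Finset.sum_add_distrib, ← Finset.sum_add_distrib]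
        apply Finset.sum_congr rfl
        intro k _
        have : k - -1 = k + 1 := by ring
        rw [this]
        ring


/-- The finite version of the classical integral representation of the spherical
harmonics: for `|m| ≤ ℓ` and `a = 2π/(2ℓ+1)`, the integral over the circle of
`e^{-imα} [cos θ + i sin θ sin(φ+α)]^ℓ` equals `2π/(2ℓ+1)` times the sum of the
integrand over the angles `j·a`, `j = -ℓ, …, ℓ`. -/
theorem integral_representation_finite (ℓ : ℕ) (hℓ : 1 ≤ ℓ) (m : ℤ) (hm : |m| ≤ (ℓ : ℤ))
    (θ φ : ℝ) :
    (∫ α in (0 : ℝ)..(2 * π),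
        Complex.exp (-Complex.I * m * α) *
          ((Real.cos θ : ℂ) + Complex.I * (Real.sin θ : ℂ) * (Real.sin (φ + α) : ℂ)) ^ ℓ)
      = ((2 * π / (2 * ℓ + 1) : ℝ) : ℂ) *
          ∑ j ∈ Finset.Icc (-(ℓ : ℤ)) ℓ,
            Complex.exp (-Complex.I * m * j * ((2 * π / (2 * ℓ + 1) : ℝ) : ℂ)) *
              ((Real.cos θ : ℂ) + Complex.I * (Real.sin θ : ℂ) *
                (Real.sin (φ + (j : ℝ) * (2 * π / (2 * ℓ + 1))) : ℂ)) ^ ℓ := by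
  obtain ⟨c, hsupp, hform⟩ := pow_expand θ φ ℓ
  have hm' : m.natAbs ≤ ℓ := by rw [Int.abs_eq_natAbs] at hm; omega
  set a : ℝ := 2 * π / (2 * ℓ + 1) with ha
  -- pointwise rewriting of the integrand
  have hpt : ∀ α : ℝ, Complex.exp (-Complex.I * m * α) *
      ((Real.cos θ : ℂ) + Complex.I * (Real.sin θ : ℂ) * (Real.sin (φ + α) : ℂ)) ^ ℓ
      = ∑ k ∈ Finset.Icc (-(ℓ:ℤ)) ℓ, c k * Ee (k - m) α := by
    intro α
    rw [hform α, Finset.mul_sum]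
    apply Finset.sum_congr rfl
    intro k _
    have hE : Complex.exp (-Complex.I * m * α) = Ee (-m) α := by
      rw [Ee]; congr 1; push_cast; ring
    rw [hE]
    have : Ee (-m) α * (c k * Ee k α) = c k * (Ee k α * Ee (-m) α) := by ring
    rw [this, Ee_mul, show k + -m = k - m from by ring]
  -- LHS
  have hmem : m ∈ Finset.Icc (-(ℓ:ℤ)) ℓ := by
    simp only [Finset.mem_Icc]; omega
  have hL : (∫ α in (0:ℝ)..(2*π), Complex.exp (-Complex.I * m * α) *
      ((Real.cos θ : ℂ) + Complex.I * (Real.sin θ : ℂ) * (Real.sin (φ + α) : ℂ)) ^ ℓ)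
      = c m * ((2*π : ℝ) : ℂ) := by
    rw [intervalIntegral.integral_congr (g := fun α => ∑ k ∈ Finset.Icc (-(ℓ:ℤ)) ℓ,
      c k * Ee (k - m) α) (fun α _ => hpt α)]
    rw [intervalIntegral.integral_finset_sum (f := fun k α => c k * Ee (k - m) α) (fun k _ =>
      ((continuous_const.mul (Ee_cont (k - m))).intervalIntegrable _ _))]
    have : ∀ k ∈ Finset.Icc (-(ℓ:ℤ)) ℓ,
        (∫ α in (0:ℝ)..(2*π), c k * Ee (k - m) α)
          = if k = m then c m * ((2*π:ℝ):ℂ) else 0 := by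
      intro k _
      rw [intervalIntegral.integral_const_mul, integral_Ee]
      rcases eq_or_ne k m with h | h
      · subst h; simp
      · rw [if_neg (by omega), if_neg h, mul_zero]
    rw [Finset.sum_congr rfl this, Finset.sum_ite_eq' _ m, if_pos hmem]
  rw [hL]
  -- RHS
  have hR : ∀ j ∈ Finset.Icc (-(ℓ:ℤ)) ℓ,
      Complex.exp (-Complex.I * m * j * ((a : ℝ) : ℂ)) *
        ((Real.cos θ : ℂ) + Complex.I * (Real.sin θ : ℂ) *
          (Real.sin (φ + (j : ℝ) * a) : ℂ)) ^ ℓ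
      = ∑ k ∈ Finset.Icc (-(ℓ:ℤ)) ℓ, c k * Ee (k - m) ((j:ℝ) * a) := by
    intro j _
    have := hpt ((j:ℝ) * a)
    rw [← this]
    congr 2
    push_cast
    ring
  rw [Finset.sum_congr rfl hR, Finset.sum_comm]
  have hinner : ∀ k ∈ Finset.Icc (-(ℓ:ℤ)) ℓ,
      (∑ j ∈ Finset.Icc (-(ℓ:ℤ)) ℓ, c k * Ee (k - m) ((j:ℝ) * a))
        = if k = m then c m * (2*(ℓ:ℂ)+1) else 0 := by
    intro k hk
    simp only [Finset.mem_Icc] at hk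
    rw [← Finset.mul_sum]
    have habs : (k - m).natAbs ≤ 2 * ℓ := by omega
    rw [sum_Ee ℓ (k - m) habs]
    rcases eq_or_ne k m with h | h
    · subst h; simp
    · rw [if_neg (by omega), if_neg h, mul_zero]
  rw [Finset.sum_congr rfl hinner, Finset.sum_ite_eq' _ m, if_pos hmem]
  have h2π : ((a:ℝ):ℂ) * (2*(ℓ:ℂ)+1) = ((2*π : ℝ):ℂ) := by
    have : (a:ℝ) * (2*(ℓ:ℝ)+1) = 2*π := by
      rw [ha]; field_simp
    calc ((a:ℝ):ℂ) * (2*(ℓ:ℂ)+1) = (((a:ℝ) * (2*(ℓ:ℝ)+1) : ℝ) : ℂ) := by push_cast; ring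
      _ = ((2*π : ℝ):ℂ) := by rw [this]
  calc c m * ((2*π:ℝ):ℂ) = ((a:ℝ):ℂ) * (2*(ℓ:ℂ)+1) * c m := by rw [h2π]; ring
    _ = ((a:ℝ):ℂ) * (c m * (2*(ℓ:ℂ)+1)) := by ring
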